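/- Consider the MISO wiretap channel (n_R = n_E = 1) with nonzero h_R, h_E ∈ ℂ^{n_T}, and assume h_R h_R† − h_E h_E† has a positive eigenvalue. Set S_R = ρ h_R h_R†, S_E = ρ h_E h_E†, and Θ(Q) = S_R(I + Q S_R)⁻¹ − S_E(I + Q S_E)⁻¹. If Q ∈ Ω satisfies Q Θ(Q) = Tr(Q Θ(Q)) · Q and λ_max(Θ(Q)) = Tr(Q Θ(Q)), then Q is a global maximizer of the secrecy rate: C_s(Q) ≥ C_s(Q') for all Q' ∈ Ω. -/

import Mathlib

open Matrix
open scoped ComplexOrder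

lemma aux_mul_vecMulVec {n : Type*} [Fintype n] (M : Matrix n n ℂ) (u v : n → ℂ) :
    M * vecMulVec u v = vecMulVec (M *ᵥ u) v := by
  ext i j
  simp only [mul_apply, vecMulVec_apply, mulVec, dotProduct, Finset.sum_mul]
  exact Finset.sum_congr rfl fun k _ => by ring

lemma aux_vecMulVec_mul {n : Type*} [Fintype n] (M : Matrix n n ℂ) (u v : n → ℂ) :
    vecMulVec u v * M = vecMulVec u (v ᵥ* M) := by
  ext i j
  simp only [mul_apply, vecMulVec_apply, vecMul, dotProduct, Finset.mul_sum]
  exact Finset.sum_congr rfl fun k _ => by ring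

lemma aux_vecMulVec_mul_vecMulVec {n : Type*} [Fintype n] (a b c d : n → ℂ) :
    vecMulVec a b * vecMulVec c d = (b ⬝ᵥ c) • vecMulVec a d := by
  ext i j
  simp only [mul_apply, vecMulVec_apply, Matrix.smul_apply, smul_eq_mul, dotProduct, Finset.sum_mul]
  exact Finset.sum_congr rfl fun k _ => by ring

lemma aux_trace_vecMulVec {n : Type*} [Fintype n] (u v : n → ℂ) :
    (vecMulVec u v).trace = u ⬝ᵥ v := by
  simp [Matrix.trace, Matrix.diag, vecMulVec_apply, dotProduct]

lemma aux_psd_trace_nonneg {n : Type*} [Fintype n] [DecidableEq n] {A : Matrix n n ℂ}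
    (hA : A.PosSemidef) : 0 ≤ A.trace := by
  rw [Matrix.trace]
  refine Finset.sum_nonneg fun i _ => ?_
  have := hA.dotProduct_mulVec_nonneg (Pi.single i 1)
  simpa [Matrix.mulVec_single, dotProduct, Pi.single_apply] using this

lemma aux_trace_mul_psd_nonneg {n : Type*} [Fintype n] [DecidableEq n]
    {A B : Matrix n n ℂ} (hA : A.PosSemidef) (hB : B.PosSemidef) :
    0 ≤ (A * B).trace := by
  obtain ⟨m, v, rfl⟩ := Matrix.posSemidef_iff_eq_sum_vecMulVec.mp hB
  rw [Matrix.mul_sum, Matrix.trace_sum]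
  refine Finset.sum_nonneg fun k _ => ?_
  rw [aux_mul_vecMulVec, aux_trace_vecMulVec, dotProduct_comm]
  exact hA.dotProduct_mulVec_nonneg (v k)

lemma aux_keyinv {n : Type*} [Fintype n] [DecidableEq n] (S Q : Matrix n n ℂ) (a : ℂ)
    (ha : a ≠ 0) (hSQS : S * Q * S = (a - 1) • S) :
    S * (1 + Q * S)⁻¹ = a⁻¹ • S := by
  have e1 : a⁻¹ * (a - 1) = 1 - a⁻¹ := by field_simp
  have hQSQS : (Q * S) * (Q * S) = (a - 1) • (Q * S) := by
    have : (Q * S) * (Q * S) = Q * (S * Q * S) := by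
      simp only [Matrix.mul_assoc]
    rw [this, hSQS, Matrix.mul_smul]
  have hinv : (1 + Q * S) * (1 - a⁻¹ • (Q * S)) = 1 := by
    rw [mul_sub, mul_one, Matrix.mul_smul, add_mul, one_mul, hQSQS, smul_add, smul_smul, e1]
    have h3 : a⁻¹ • (Q * S) + (1 - a⁻¹) • (Q * S) = Q * S := by
      rw [← add_smul]
      have : a⁻¹ + (1 - a⁻¹) = 1 := by ring
      rw [this, one_smul]
    rw [h3, add_sub_cancel_right]
  have h1 : (1 + Q * S)⁻¹ = 1 - a⁻¹ • (Q * S) := Matrix.inv_eq_right_inv hinv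
  rw [h1, mul_sub, mul_one, Matrix.mul_smul, ← Matrix.mul_assoc, hSQS, smul_smul, e1,
    sub_smul, one_smul, sub_sub_cancel]

lemma aux_bddAbove {n : ℕ} (A : Matrix (Fin n) (Fin n) ℂ) :
    BddAbove {t : ℝ | ∃ v : Fin n → ℂ, v ≠ 0 ∧ A *ᵥ v = (t : ℂ) • v} := by
  refine ⟨∑ i, ∑ j, ‖A i j‖, ?_⟩
  rintro t ⟨v, hv, hAv⟩
  obtain ⟨j0, hj0⟩ := Function.ne_iff.mp hv
  obtain ⟨i, -, hi⟩ := Finset.exists_max_image Finset.univ (fun i => ‖v i‖)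
    ⟨j0, Finset.mem_univ _⟩
  have hvi : 0 < ‖v i‖ :=
    lt_of_lt_of_le (by simpa using hj0) (hi j0 (Finset.mem_univ _))
  have h1 : (t : ℂ) * v i = ∑ j, A i j * v j := by
    have := congrFun hAv i
    simp only [mulVec, dotProduct, Pi.smul_apply, smul_eq_mul] at this
    exact this.symm
  have h2 : t * ‖v i‖ ≤ (∑ j, ‖A i j‖) * ‖v i‖ := by
    calc t * ‖v i‖ ≤ |t| * ‖v i‖ := by
          exact mul_le_mul_of_nonneg_right (le_abs_self t) (norm_nonneg _)
      _ = ‖(t : ℂ) * v i‖ := by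
          rw [norm_mul, Complex.norm_real, Real.norm_eq_abs]
      _ = ‖∑ j, A i j * v j‖ := by rw [h1]
      _ ≤ ∑ j, ‖A i j * v j‖ := norm_sum_le _ _
      _ ≤ ∑ j, ‖A i j‖ * ‖v i‖ := by
          refine Finset.sum_le_sum fun j _ => ?_
          rw [norm_mul]
          exact mul_le_mul_of_nonneg_left (hi j (Finset.mem_univ _)) (norm_nonneg _)
      _ = (∑ j, ‖A i j‖) * ‖v i‖ := by rw [Finset.sum_mul]
  have h3 : t ≤ ∑ j, ‖A i j‖ := le_of_mul_le_mul_right h2 hvi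
  refine h3.trans ?_
  exact Finset.single_le_sum (f := fun i => ∑ j, ‖A i j‖)
    (fun k _ => Finset.sum_nonneg fun j _ => norm_nonneg _) (Finset.mem_univ i)

/-- The largest eigenvalue of a (Hermitian) complex matrix, expressed as the
supremum of its real eigenvalues. -/
noncomputable def lamMax {n : ℕ} (A : Matrix (Fin n) (Fin n) ℂ) : ℝ :=
  sSup {t : ℝ | ∃ v : Fin n → ℂ, v ≠ 0 ∧ A *ᵥ v = (t : ℂ) • v}

lemma aux_psd_of_lamMax {n : ℕ} {Θ : Matrix (Fin n) (Fin n) ℂ} (hH : Θ.IsHermitian) {μ : ℝ}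
    (h : lamMax Θ = μ) : (((μ : ℂ) • (1 : Matrix (Fin n) (Fin n) ℂ)) - Θ).PosSemidef := by
  have hM : (((μ : ℂ) • (1 : Matrix (Fin n) (Fin n) ℂ)) - Θ).IsHermitian := by
    simp [Matrix.IsHermitian, conjTranspose_sub, conjTranspose_smul, Complex.star_def,
      Complex.conj_ofReal, hH.eq]
  refine hM.posSemidef_iff_eigenvalues_nonneg.mpr fun i => show (0:ℝ) ≤ hM.eigenvalues i from ?_
  set lam := hM.eigenvalues i with hlam
  have hu := hM.mulVec_eigenvectorBasis i
  set u : Fin n → ℂ := ⇑(hM.eigenvectorBasis i) with hudef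
  have hune : u ≠ 0 := by
    intro h0
    exact hM.eigenvectorBasis.orthonormal.ne_zero i (by ext j; exact congrFun h0 j)
  have hsm : lam • u = ((lam : ℝ) : ℂ) • u := by
    ext j; simp [Complex.real_smul]
  rw [Matrix.sub_mulVec, Matrix.smul_mulVec, Matrix.one_mulVec, hsm] at hu
  have hθu : Θ *ᵥ u = ((μ - lam : ℝ) : ℂ) • u := by
    have h2 : Θ *ᵥ u = (μ : ℂ) • u - ((lam : ℝ) : ℂ) • u := by
      rw [← hu]; abel
    rw [h2, ← sub_smul, Complex.ofReal_sub]
  have hle : μ - lam ≤ lamMax Θ := le_csSup (aux_bddAbove Θ) ⟨u, hune, hθu⟩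
  rw [h] at hle
  linarith

/-- In the MISO wiretap channel with `h_R h_R† − h_E h_E†` having
a positive eigenvalue, if `Q ∈ Ω` satisfies `Q Θ(Q) = Tr(Q Θ(Q)) Q` and
`λ_max(Θ(Q)) = Tr(Q Θ(Q))`, where `S_R = ρ h_R h_R†`, `S_E = ρ h_E h_E†` and
`Θ(Q) = S_R(I+QS_R)⁻¹ − S_E(I+QS_E)⁻¹`, then `Q` is a global maximizer of the
secrecy rate over `Ω`. -/
theorem stmt_10 (nT : ℕ) (hR hE : Fin nT → ℂ) (hRne : hR ≠ 0) (hEne : hE ≠ 0)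
    (ρ : ℝ) (hρ : 0 < ρ)
    (hpos : ∃ (t : ℝ) (v : Fin nT → ℂ), 0 < t ∧ v ≠ 0 ∧
      (vecMulVec hR (star hR) - vecMulVec hE (star hE)) *ᵥ v = (t : ℂ) • v)
    (SR SE Θ : Matrix (Fin nT) (Fin nT) ℂ)
    (hSR : SR = (ρ : ℂ) • vecMulVec hR (star hR))
    (hSE : SE = (ρ : ℂ) • vecMulVec hE (star hE))
    (Q : Matrix (Fin nT) (Fin nT) ℂ) (hQ : Q.PosSemidef) (htr : Q.trace = 1)
    (hΘ : Θ = SR * (1 + Q * SR)⁻¹ - SE * (1 + Q * SE)⁻¹)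
    (heq1 : Q * Θ = (Q * Θ).trace • Q)
    (heq2 : lamMax Θ = (Q * Θ).trace.re) :
    ∀ Q' : Matrix (Fin nT) (Fin nT) ℂ, Q'.PosSemidef → Q'.trace = 1 →
      Real.log (1 + ρ * (star hR ⬝ᵥ (Q' *ᵥ hR)).re)
          - Real.log (1 + ρ * (star hE ⬝ᵥ (Q' *ᵥ hE)).re)
        ≤ Real.log (1 + ρ * (star hR ⬝ᵥ (Q *ᵥ hR)).re)
          - Real.log (1 + ρ * (star hE ⬝ᵥ (Q *ᵥ hE)).re) := by
  intro Q' hQ' htrQ'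
  have key : ∀ (P : Matrix (Fin nT) (Fin nT) ℂ), P.PosSemidef → ∀ h : Fin nT → ℂ,
      (star h ⬝ᵥ P *ᵥ h) = (((star h ⬝ᵥ P *ᵥ h).re : ℝ) : ℂ) ∧
        0 ≤ (star h ⬝ᵥ P *ᵥ h).re := by
    intro P hP h
    have hnn := hP.dotProduct_mulVec_nonneg h
    rw [Complex.le_def] at hnn
    constructor
    · apply Complex.ext <;> simp [← hnn.2]
    · simpa using hnn.1
  obtain ⟨hxeqR, hreR⟩ := key Q hQ hR
  obtain ⟨hxeqE, hreE⟩ := key Q hQ hE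
  obtain ⟨hxeqR', hreR'⟩ := key Q' hQ' hR
  obtain ⟨hxeqE', hreE'⟩ := key Q' hQ' hE
  set α : ℝ := (star hR ⬝ᵥ Q *ᵥ hR).re with hαdef
  set β : ℝ := (star hE ⬝ᵥ Q *ᵥ hE).re with hβdef
  set γ : ℝ := (star hR ⬝ᵥ Q' *ᵥ hR).re with hγdef
  set δ : ℝ := (star hE ⬝ᵥ Q' *ᵥ hE).re with hδdef
  have ha0 : (0:ℝ) < 1 + ρ * α := by nlinarith
  have hb0 : (0:ℝ) < 1 + ρ * β := by nlinarith
  have hx0 : (0:ℝ) < 1 + ρ * γ := by nlinarith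
  have hy0 : (0:ℝ) < 1 + ρ * δ := by nlinarith
  -- the two inverse identities
  have keyinv2 : ∀ (h : Fin nT → ℂ) (S : Matrix (Fin nT) (Fin nT) ℂ),
      S = (ρ : ℂ) • vecMulVec h (star h) → ∀ x : ℝ, (star h ⬝ᵥ Q *ᵥ h) = (x : ℂ) →
      0 < 1 + ρ * x → S * (1 + Q * S)⁻¹ = (((1 + ρ * x : ℝ) : ℂ))⁻¹ • S := by
    intro h S hS x hx hx0'
    apply aux_keyinv
    · exact_mod_cast hx0'.ne'
    · rw [hS, Matrix.smul_mul, Matrix.mul_smul, Matrix.smul_mul,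
        aux_vecMulVec_mul, aux_vecMulVec_mul_vecMulVec, ← Matrix.dotProduct_mulVec, hx,
        smul_smul, smul_smul, smul_smul]
      congr 1
      push_cast
      ring
  have hinvR := keyinv2 hR SR hSR α hxeqR ha0
  have hinvE := keyinv2 hE SE hSE β hxeqE hb0
  have hΘeq : Θ = (((1 + ρ * α : ℝ) : ℂ))⁻¹ • SR - (((1 + ρ * β : ℝ) : ℂ))⁻¹ • SE := by
    rw [hΘ, hinvR, hinvE]
  -- trace identities
  have htrS : ∀ (P : Matrix (Fin nT) (Fin nT) ℂ) (h : Fin nT → ℂ)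
      (S : Matrix (Fin nT) (Fin nT) ℂ), S = (ρ : ℂ) • vecMulVec h (star h) →
      (P * S).trace = (ρ : ℂ) * (star h ⬝ᵥ P *ᵥ h) := by
    intro P h S hS
    rw [hS, Matrix.mul_smul, trace_smul, aux_mul_vecMulVec, aux_trace_vecMulVec,
      dotProduct_comm, smul_eq_mul]
  have htrQΘ : (Q * Θ).trace
      = ((ρ * α / (1 + ρ * α) - ρ * β / (1 + ρ * β) : ℝ) : ℂ) := by
    rw [hΘeq, mul_sub, Matrix.mul_smul, Matrix.mul_smul, trace_sub, trace_smul, trace_smul,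
      htrS Q hR SR hSR, htrS Q hE SE hSE, hxeqR, hxeqE, smul_eq_mul, smul_eq_mul]
    push_cast
    field_simp
  have hΘH : Θ.IsHermitian := by
    have hv : ∀ h : Fin nT → ℂ, (vecMulVec h (star h))ᴴ = vecMulVec h (star h) := by
      intro h; ext i j
      simp [conjTranspose_apply, vecMulVec_apply, Complex.star_def, mul_comm]
    rw [hΘeq, hSR, hSE]
    simp [Matrix.IsHermitian, conjTranspose_sub, conjTranspose_smul, Complex.star_def,
      Complex.conj_ofReal, hv]
  have heq2' : lamMax Θ = ρ * α / (1 + ρ * α) - ρ * β / (1 + ρ * β) := by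
    rw [heq2, htrQΘ, Complex.ofReal_re]
  have hPSD := aux_psd_of_lamMax hΘH heq2'
  have htr0 : 0 ≤ (Q' * (((ρ * α / (1 + ρ * α) - ρ * β / (1 + ρ * β) : ℝ) : ℂ) • 1 - Θ)).trace :=
    aux_trace_mul_psd_nonneg hQ' hPSD
  have htr0' : (Q' * (((ρ * α / (1 + ρ * α) - ρ * β / (1 + ρ * β) : ℝ) : ℂ) • 1 - Θ)).trace
      = (((ρ * α / (1 + ρ * α) - ρ * β / (1 + ρ * β))
          - (ρ * γ / (1 + ρ * α) - ρ * δ / (1 + ρ * β)) : ℝ) : ℂ) := by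
    rw [mul_sub, Matrix.mul_smul, mul_one, trace_sub, trace_smul, htrQ',
      hΘeq, mul_sub, Matrix.mul_smul, Matrix.mul_smul, trace_sub, trace_smul, trace_smul,
      htrS Q' hR SR hSR, htrS Q' hE SE hSE, hxeqR', hxeqE',
      smul_eq_mul, smul_eq_mul, smul_eq_mul]
    push_cast
    ring
  have hkey : 0 ≤ (ρ * α / (1 + ρ * α) - ρ * β / (1 + ρ * β))
      - (ρ * γ / (1 + ρ * α) - ρ * δ / (1 + ρ * β)) := by
    rw [htr0', Complex.le_def] at htr0
    simpa only [Complex.ofReal_re, Complex.zero_re] using htr0.1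
  -- clear denominators
  have h5 : ρ * γ / (1 + ρ * α) - ρ * δ / (1 + ρ * β)
      ≤ ρ * α / (1 + ρ * α) - ρ * β / (1 + ρ * β) := by linarith
  have h6 := mul_le_mul_of_nonneg_right h5 (le_of_lt (mul_pos ha0 hb0))
  have e1 : (ρ * γ / (1 + ρ * α) - ρ * δ / (1 + ρ * β)) * ((1 + ρ * α) * (1 + ρ * β))
      = ρ * γ * (1 + ρ * β) - ρ * δ * (1 + ρ * α) := by
    field_simp
  have e2 : (ρ * α / (1 + ρ * α) - ρ * β / (1 + ρ * β)) * ((1 + ρ * α) * (1 + ρ * β))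
      = ρ * α * (1 + ρ * β) - ρ * β * (1 + ρ * α) := by
    field_simp
  rw [e1, e2] at h6
  -- final log comparison
  rw [← Real.log_div hx0.ne' hy0.ne', ← Real.log_div ha0.ne' hb0.ne']
  apply Real.log_le_log (by positivity)
  rw [div_le_div_iff₀ hy0 hb0]
  nlinarith [h6]
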